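/- With notation as in the lifted-axis construction (p, x in the unit ball, ε ∈ (0,1/8], x↑ the shrink-lift of x, ē_i the lifted axis, and β(ε) = (1-√(1-ε²))/√(1-ε²)), the angle θ_i = arcsin(|ē_iᵀ·x↑|) satisfies max(0, ε(1-ε)·(|x_i - p_i| - β(ε))) ≤ θ_i ≤ ε(1+ε)·(|x_i - p_i| + β(ε)). -/

import Mathlib

set_option maxHeartbeats 2000000

open scoped RealInnerProductSpace

noncomputable def shrinkLift (d : ℕ) (ε : ℝ) (x : EuclideanSpace ℝ (Fin d)) :
    EuclideanSpace ℝ (Fin (d + 1)) :=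
  WithLp.toLp 2 (fun i => if h : (i : ℕ) < d then ε * x ⟨i, h⟩ else Real.sqrt (1 - ε ^ 2 * ‖x‖ ^ 2))

noncomputable def liftedAxis (d : ℕ) (ε : ℝ) (p : EuclideanSpace ℝ (Fin d)) (i : Fin d) :
    EuclideanSpace ℝ (Fin (d + 1)) :=
  let sgn : ℝ := if 0 ≤ p i then 1 else -1
  let z : ℝ := Real.sqrt (ε ^ 2 * (p i) ^ 2 + 1 - ε ^ 2 * ‖p‖ ^ 2)
  let a : ℝ := -sgn * Real.sqrt (1 - ε ^ 2 * ‖p‖ ^ 2) / z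
  WithLp.toLp 2 (fun j => if h : (j : ℕ) < d then (if (⟨j, h⟩ : Fin d) = i then a else 0)
           else Real.sqrt (1 - a ^ 2))

noncomputable def betaErr (ε : ℝ) : ℝ :=
  (1 - Real.sqrt (1 - ε ^ 2)) / Real.sqrt (1 - ε ^ 2)

lemma norm_sq_coord {d : ℕ} (p : EuclideanSpace ℝ (Fin d)) (i : Fin d) : (p i)^2 ≤ ‖p‖^2 := by
  have h2 : ‖p‖^2 = ∑ j : Fin d, (p j)^2 := by
    rw [EuclideanSpace.norm_eq p, Real.sq_sqrt (by positivity)]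
    exact Finset.sum_congr rfl fun j _ => by rw [Real.norm_eq_abs, sq_abs]
  rw [h2]
  exact Finset.single_le_sum (fun j _ => sq_nonneg (p j)) (Finset.mem_univ i)

lemma polyU (ε s D R : ℝ) (hε0 : 0 < ε) (hε : ε ≤ 1/8) (hs1 : s ≤ 1) (hs2 : 63/64 ≤ s)
    (hs : s^2 = 1 - ε^2) (hD0 : 0 ≤ D) (hD2 : D ≤ 2)
    (hRs : R*s = ε*(1+ε)*(s*D+(1-s))) (hR0 : 0 < R) :
    ε*(D+(1-s)) ≤ (R - R^3/4)*s := by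
  have hspos : 0 < s := by linarith
  have hsq : s ≥ 1 - ε^2 := by
    nlinarith [mul_nonneg (by linarith : (0:ℝ) ≤ s) (by linarith : (0:ℝ) ≤ 1-s)]
  have h1 : s + ε*s - 1 ≥ (55/64)*ε := by nlinarith
  have hsD : s*D ≤ D := by nlinarith
  have hq0 : 0 ≤ s*D + (1-s) := by nlinarith
  have hq2 : s*D + (1-s) ≤ 2 := by nlinarith
  have e3 : ε*(1+ε)*(s*D+(1-s)) ≤ (9/64)*(s*D+(1-s)) := by
    nlinarith [mul_nonneg (by nlinarith : (0:ℝ) ≤ 9/64 - ε*(1+ε)) hq0]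
  have hR63 : R*(63/64) ≤ R*s := by nlinarith [mul_nonneg hR0.le (by linarith : (0:ℝ) ≤ s - 63/64)]
  have hR7 : R ≤ (s*D + (1-s))/7 := by nlinarith
  have hR3 : R ≤ 3*ε := by nlinarith [e3, hR63]
  have hR2 : R^2 ≤ 9*ε^2 := by
    nlinarith [mul_nonneg (by linarith : (0:ℝ) ≤ 3*ε - R) (by linarith : (0:ℝ) ≤ 3*ε + R)]
  have hcube : R^3*s ≤ 9*ε^2*R := by
    nlinarith [mul_le_mul_of_nonneg_right hR2 hR0.le, sq_nonneg R,
      mul_nonneg (mul_nonneg hR0.le hR0.le) (mul_nonneg hR0.le (by linarith : (0:ℝ) ≤ 1 - s))]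
  have h4 : (9/4)*R ≤ (9/28)*D + (9/28)*(1-s) := by nlinarith
  have hmain : (9/4)*ε^2*R ≤ ε^2*((55/64)*D + (1-s)) := by
    nlinarith [mul_le_mul_of_nonneg_left h4 (sq_nonneg ε),
      mul_le_mul_of_nonneg_left (by linarith : (9/28)*D + (9/28)*(1-s) ≤ (55/64)*D + (1-s)) (sq_nonneg ε)]
  nlinarith [mul_le_mul_of_nonneg_left h1 (mul_nonneg hε0.le hD0)]

lemma core (ε u v A B z s : ℝ) (X P : ℝ)
    (hε0 : 0 < ε) (hε : ε ≤ 1/8)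
    (hX0 : 0 ≤ X) (hX1 : X ≤ 1) (hP0 : 0 ≤ P) (hP1 : P ≤ 1)
    (hu : u^2 ≤ X) (hv : v^2 ≤ P)
    (hA0 : 0 ≤ A) (hA : A^2 = 1 - ε^2*P)
    (hB0 : 0 ≤ B) (hB : B^2 = 1 - ε^2*X)
    (hz0 : 0 ≤ z) (hz : z^2 = ε^2*v^2 + 1 - ε^2*P)
    (hs0 : 0 ≤ s) (hs : s^2 = 1 - ε^2) :
    max 0 (ε*(1-ε)*(|u-v| - (1-s)/s)) ≤ Real.arcsin (ε*|u*A-v*B|/z)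
    ∧ Real.arcsin (ε*|u*A-v*B|/z) ≤ ε*(1+ε)*(|u-v| + (1-s)/s) := by
  have hε1 : ε ≤ 1 := by linarith
  have hs1 : s ≤ 1 := by nlinarith [sq_nonneg ε, sq_nonneg (s-1), sq_nonneg (s+1)]
  have hs2 : 63/64 ≤ s := by nlinarith [sq_nonneg (s - 63/64)]
  have hspos : 0 < s := by linarith
  have hA1 : A ≤ 1 := by nlinarith [sq_nonneg (A-1), sq_nonneg (A+1), mul_nonneg (sq_nonneg ε) hP0]
  have hAs : s ≤ A := by
    nlinarith [mul_nonneg (sq_nonneg ε) (by linarith : (0:ℝ) ≤ 1 - P), mul_nonneg hs0 hA0]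
  have hB1 : B ≤ 1 := by nlinarith [sq_nonneg (B-1), sq_nonneg (B+1), mul_nonneg (sq_nonneg ε) hX0]
  have hBs : s ≤ B := by
    nlinarith [mul_nonneg (sq_nonneg ε) (by linarith : (0:ℝ) ≤ 1 - X), mul_nonneg hs0 hB0]
  have hz1 : z ≤ 1 := by
    nlinarith [sq_nonneg (z-1), sq_nonneg (z+1),
      mul_nonneg (sq_nonneg ε) (by linarith [hv] : (0:ℝ) ≤ P - v^2)]
  have hzs : s ≤ z := by
    nlinarith [mul_nonneg (sq_nonneg ε) (by nlinarith [sq_nonneg v] : (0:ℝ) ≤ 1 - P + v^2),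
      mul_nonneg hs0 hz0]
  have hzpos : 0 < z := by linarith
  have hu1 : |u| ≤ 1 := by rw [abs_le]; constructor <;> nlinarith [sq_nonneg u]
  have hv1 : |v| ≤ 1 := by rw [abs_le]; constructor <;> nlinarith [sq_nonneg v]
  set D := |u-v| with hD
  set T := |u*A-v*B| with hT
  set V := |v| with hV
  have hD0 : 0 ≤ D := abs_nonneg _
  have hT0 : 0 ≤ T := abs_nonneg _
  have hV0 : 0 ≤ V := abs_nonneg _
  have hD2 : D ≤ 2 := by
    calc D ≤ |u| + |v| := abs_sub u v
    _ ≤ 2 := by linarith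
  have hABd : |A - B| ≤ 1 - s := by rw [abs_le]; constructor <;> linarith
  have hAB0 : 0 ≤ |A - B| := abs_nonneg _
  have hVab : V*|A-B| ≤ 1 - s :=
    le_trans (mul_le_mul hv1 hABd hAB0 (by norm_num)) (by norm_num)
  have hTlow : A*D - V*|A-B| ≤ T := by
    have h1 : A*(u-v) = (u*A - v*B) + v*(B-A) := by ring
    have h2 : A*D = |A*(u-v)| := by rw [abs_mul, abs_of_nonneg hA0]
    have h3 : |A*(u-v)| ≤ T + |v*(B-A)| := by rw [h1]; exact abs_add_le _ _
    have h4 : |v*(B-A)| = V*|A-B| := by rw [abs_mul, abs_sub_comm]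
    rw [h4] at h3; linarith [h2 ▸ h3]
  have hTup : T ≤ D + (1-s) := by
    have h1 : u*A - v*B = A*(u-v) + v*(A-B) := by ring
    have h2 : T ≤ A*D + V*|A-B| := by
      rw [hT, h1]
      calc |A*(u-v) + v*(A-B)| ≤ |A*(u-v)| + |v*(A-B)| := abs_add_le _ _
      _ = A*D + V*|A-B| := by rw [abs_mul, abs_mul, abs_of_nonneg hA0]
    have h3 : A*D ≤ 1*D := mul_le_mul_of_nonneg_right hA1 hD0
    linarith
  set m := ε*T/z with hm
  have hm0 : 0 ≤ m := by positivity
  have hmle : m*s ≤ ε*(D + (1-s)) := by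
    rw [hm, div_mul_eq_mul_div, div_le_iff₀ hzpos]
    have e1 : ε*T*s ≤ ε*(D+(1-s))*s :=
      mul_le_mul_of_nonneg_right (mul_le_mul_of_nonneg_left hTup hε0.le) hs0
    have e2 : ε*(D+(1-s))*s ≤ ε*(D+(1-s))*z :=
      mul_le_mul_of_nonneg_left hzs (mul_nonneg hε0.le (by linarith))
    linarith
  have hm1 : m ≤ 1/2 := by
    have e3 : ε*(D+(1-s)) ≤ (1/8)*(129/64) :=
      mul_le_mul hε (by linarith) (by linarith) (by norm_num)
    have e4 : 0 ≤ m*(s - 63/64) := mul_nonneg hm0 (by linarith)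
    linarith [e3, e4, (by ring : m*(s - 63/64) = m*s - m*(63/64))]
  constructor
  · apply max_le (Real.arcsin_nonneg.2 hm0)
    have harc : m ≤ Real.arcsin m := by
      linarith [Real.sin_le (Real.arcsin_nonneg.2 hm0),
        Real.sin_arcsin (by linarith : (-1:ℝ) ≤ m) (by linarith : m ≤ 1)]
    have hkey : ε*(1-ε)*(D - (1-s)/s) ≤ m := by
      rcases le_or_gt (s*D) (1-s) with hc | hc
      · have h5 : D - (1-s)/s ≤ 0 := by
          rw [sub_nonpos, le_div_iff₀ hspos]; linarith [mul_comm D s]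
        have h6 : ε*(1-ε)*(D-(1-s)/s) ≤ 0 :=
          mul_nonpos_of_nonneg_of_nonpos (mul_nonneg hε0.le (by linarith)) h5
        linarith
      · have hVab2 : s*(V*|A-B|) ≤ (1-s)*A := by
          have w1 : s*(V*|A-B|) ≤ s*(1-s) := mul_le_mul_of_nonneg_left hVab hs0
          have w2 : (1-s)*s ≤ (1-s)*A := mul_le_mul_of_nonneg_left hAs (by linarith)
          linarith
        have hsT : (1-ε)*(s*D - (1-s)) ≤ s*T := by
          have e4 : s*(A*D) - s*(V*|A-B|) ≤ s*T := by
            have w0 := mul_le_mul_of_nonneg_left hTlow hs0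
            linarith [w0, (by ring : s*(A*D - V*|A-B|) = s*(A*D) - s*(V*|A-B|))]
          have e5 : A*(s*D - (1-s)) ≤ s*(A*D) - (1-s)*A := le_of_eq (by ring)
          have e6 : (1-ε)*(s*D - (1-s)) ≤ A*(s*D - (1-s)) := by
            apply mul_le_mul_of_nonneg_right _ (by linarith)
            have w3 : 0 ≤ s*(1-s) := mul_nonneg hs0 (by linarith)
            have w4 : 0 ≤ ε*(1-ε) := mul_nonneg hε0.le (by linarith)
            linarith [w3, w4, (by ring : s*(1-s) = s - s^2), (by ring : ε*(1-ε) = ε - ε^2)]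
          linarith
        have hmT : ε*T ≤ m := by
          rw [hm, le_div_iff₀ hzpos]
          calc ε*T*z ≤ ε*T*1 := mul_le_mul_of_nonneg_left hz1 (by positivity)
          _ = ε*T := by ring
        have heq : ε*(1-ε)*(D - (1-s)/s) = ε*((1-ε)*(s*D-(1-s)))/s := by
          field_simp
        rw [heq, div_le_iff₀ hspos]
        have a1 := mul_le_mul_of_nonneg_left hsT hε0.le
        have a2 := mul_le_mul_of_nonneg_right hmT hs0
        linarith [a1, a2, (by ring : ε*(s*T) = ε*T*s)]
    linarith
  · set R := ε*(1+ε)*(D + (1-s)/s) with hR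
    have hslt : s < 1 := by
      by_contra hcon
      push_neg at hcon
      have w5 : (1:ℝ)*1 ≤ s*s := mul_le_mul hcon hcon (by norm_num) hs0
      have w6 : (0:ℝ) < ε^2 := pow_pos hε0 2
      linarith [w5, w6, (by ring : s*s = s^2)]
    have hbs0 : 0 < (1-s)/s := div_pos (by linarith) hspos
    have hbs : (1-s)/s ≤ 1/60 := by rw [div_le_iff₀ hspos]; linarith
    have hR0 : 0 < R := by
      rw [hR]
      exact mul_pos (mul_pos hε0 (by linarith)) (by linarith)
    have hRs : R*s = ε*(1+ε)*(s*D+(1-s)) := by rw [hR]; field_simp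
    have hR1 : R ≤ 3/10 := by
      have hq0 : (0:ℝ) ≤ D + (1-s)/s := by linarith
      have h8 : (1+ε)*(D+(1-s)/s) ≤ (9/8)*(121/60) :=
        mul_le_mul (by linarith) (by linarith) hq0 (by norm_num)
      have h9 : ε*((1+ε)*(D+(1-s)/s)) ≤ ε*((9/8)*(121/60)) :=
        mul_le_mul_of_nonneg_left h8 hε0.le
      linarith [h9]
    have hsinR : R - R^3/4 < Real.sin R := by
      have := Real.sin_gt_sub_cube hR0
      linarith [pow_pos hR0 3]
    have hmR : m ≤ Real.sin R := by
      have hp := polyU ε s D R hε0 hε hs1 hs2 hs hD0 hD2 hRs hR0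
      have := le_of_mul_le_mul_right (by linarith : m*s ≤ (R-R^3/4)*s) hspos
      linarith
    have h7 : Real.arcsin m ≤ Real.arcsin (Real.sin R) := Real.monotone_arcsin hmR
    have harc : Real.arcsin (Real.sin R) = R := by
      apply Real.arcsin_sin <;> linarith [Real.pi_gt_three]
    rw [harc] at h7
    exact h7

lemma inner_eq (d : ℕ) (ε : ℝ) (p x : EuclideanSpace ℝ (Fin d)) (i : Fin d) :
    (⟪liftedAxis d ε p i, shrinkLift d ε x⟫ : ℝ) =
      (-(if 0 ≤ p i then (1:ℝ) else -1) * Real.sqrt (1 - ε ^ 2 * ‖p‖ ^ 2) /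
          Real.sqrt (ε ^ 2 * (p i) ^ 2 + 1 - ε ^ 2 * ‖p‖ ^ 2)) * (ε * x i) +
      Real.sqrt (1 - (-(if 0 ≤ p i then (1:ℝ) else -1) * Real.sqrt (1 - ε ^ 2 * ‖p‖ ^ 2) /
          Real.sqrt (ε ^ 2 * (p i) ^ 2 + 1 - ε ^ 2 * ‖p‖ ^ 2)) ^ 2) *
        Real.sqrt (1 - ε ^ 2 * ‖x‖ ^ 2) := by
  set sgn : ℝ := if 0 ≤ p i then (1:ℝ) else -1 with hsgn
  set z : ℝ := Real.sqrt (ε ^ 2 * (p i) ^ 2 + 1 - ε ^ 2 * ‖p‖ ^ 2) with hz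
  set a : ℝ := -sgn * Real.sqrt (1 - ε ^ 2 * ‖p‖ ^ 2) / z with ha
  rw [PiLp.inner_apply, Fin.sum_univ_castSucc]
  have h1 : ∀ k : Fin d, (inner ℝ ((liftedAxis d ε p i) k.castSucc) ((shrinkLift d ε x) k.castSucc) : ℝ)
      = (if k = i then a else 0) * (ε * x k) := by
    intro k
    have hk : ((k.castSucc : Fin (d+1)) : ℕ) < d := k.isLt
    simp only [liftedAxis, shrinkLift, PiLp.toLp_apply, dif_pos hk, RCLike.inner_apply', conj_trivial]
    congr 1
  have h2 : (inner ℝ ((liftedAxis d ε p i) (Fin.last d)) ((shrinkLift d ε x) (Fin.last d)) : ℝ)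
      = Real.sqrt (1 - a ^ 2) * Real.sqrt (1 - ε ^ 2 * ‖x‖ ^ 2) := by
    have hk : ¬ ((Fin.last d : Fin (d+1)) : ℕ) < d := by simp
    simp only [liftedAxis, shrinkLift, PiLp.toLp_apply, dif_neg hk, RCLike.inner_apply', conj_trivial]
    rfl
  rw [h2]
  congr 1
  · rw [Finset.sum_congr rfl (fun k _ => h1 k)]
    rw [show (fun k : Fin d => (if k = i then a else 0) * (ε * x k)) = (fun k : Fin d => if k = i then a * (ε * x k) else 0) from funext fun k => by split <;> simp]
    rw [Finset.sum_ite_eq' Finset.univ i (fun k => a * (ε * x k))]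
    simp

theorem stmt_16 (d : ℕ) (p x : EuclideanSpace ℝ (Fin d)) (hp : ‖p‖ ≤ 1) (hx : ‖x‖ ≤ 1)
    (ε : ℝ) (hε0 : 0 < ε) (hε : ε ≤ 1 / 8) (i : Fin d) :
    max 0 (ε * (1 - ε) * (|x i - p i| - betaErr ε)) ≤
      Real.arcsin |⟪liftedAxis d ε p i, shrinkLift d ε x⟫| ∧
    Real.arcsin |⟪liftedAxis d ε p i, shrinkLift d ε x⟫| ≤
      ε * (1 + ε) * (|x i - p i| + betaErr ε) := by
  have hε1 : ε ≤ 1 := by linarith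
  set u := x i with hu
  set v := p i with hv
  set P := ‖p‖^2 with hP
  set X := ‖x‖^2 with hX
  have hP0 : 0 ≤ P := sq_nonneg _
  have hX0 : 0 ≤ X := sq_nonneg _
  have hP1 : P ≤ 1 := by
    rw [hP]; nlinarith [norm_nonneg p]
  have hX1 : X ≤ 1 := by
    rw [hX]; nlinarith [norm_nonneg x]
  have hvP : v^2 ≤ P := norm_sq_coord p i
  have huX : u^2 ≤ X := norm_sq_coord x i
  set A := Real.sqrt (1 - ε^2*P) with hA
  set B := Real.sqrt (1 - ε^2*X) with hB
  set z := Real.sqrt (ε^2*v^2 + 1 - ε^2*P) with hz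
  set s := Real.sqrt (1 - ε^2) with hs
  have hA0 : 0 ≤ A := Real.sqrt_nonneg _
  have hB0 : 0 ≤ B := Real.sqrt_nonneg _
  have hz0 : 0 ≤ z := Real.sqrt_nonneg _
  have hs0 : 0 ≤ s := Real.sqrt_nonneg _
  have hA2 : A^2 = 1 - ε^2*P := Real.sq_sqrt (by nlinarith)
  have hB2 : B^2 = 1 - ε^2*X := Real.sq_sqrt (by nlinarith)
  have hz2 : z^2 = ε^2*v^2 + 1 - ε^2*P := Real.sq_sqrt (by nlinarith [sq_nonneg v, sq_nonneg ε])
  have hs2 : s^2 = 1 - ε^2 := Real.sq_sqrt (by nlinarith)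
  have hzpos : 0 < z := by
    rw [hz]; apply Real.sqrt_pos.2; nlinarith [sq_nonneg v, sq_nonneg ε]
  set sgn : ℝ := if 0 ≤ v then (1:ℝ) else -1 with hsgn
  have hsgn2 : sgn^2 = 1 := by rw [hsgn]; split <;> norm_num
  have hsv : sgn * v = |v| := by
    rw [hsgn]; rcases le_or_gt 0 v with h | h
    · rw [if_pos h, abs_of_nonneg h]; ring
    · rw [if_neg (not_le.2 h), abs_of_neg h]; ring
  set a : ℝ := -sgn * A / z with ha
  have ha2 : 1 - a^2 = (ε*|v|/z)^2 := by
    rw [ha]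
    field_simp
    have w1 : (sgn*A)^2 = A^2 := by rw [mul_pow, hsgn2, one_mul]
    have w2 : (ε*|v|)^2 = ε^2*v^2 := by rw [mul_pow, sq_abs]
    linarith [hz2, hA2, w1, w2]
  have hsq : Real.sqrt (1 - a^2) = ε*|v|/z := by
    rw [ha2, Real.sqrt_sq (by positivity)]
  have hinner : (⟪liftedAxis d ε p i, shrinkLift d ε x⟫ : ℝ) = a * (ε * u) + (ε*|v|/z) * B := by
    rw [inner_eq d ε p x i, ← hsq]
  have hinner2 : (⟪liftedAxis d ε p i, shrinkLift d ε x⟫ : ℝ) = ε * sgn * (v*B - u*A) / z := by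
    rw [hinner, ha, ← hsv]
    field_simp
    ring
  have habs2 : |(⟪liftedAxis d ε p i, shrinkLift d ε x⟫ : ℝ)| = ε*|u*A - v*B|/z := by
    rw [hinner2, abs_div, abs_of_pos hzpos, abs_mul, abs_mul, abs_of_pos hε0,
      abs_sub_comm, hsgn]
    split <;> simp
  have hbeta : betaErr ε = (1-s)/s := rfl
  have hcore := core ε u v A B z s X P hε0 hε hX0 hX1 hP0 hP1 huX hvP hA0 hA2 hB0 hB2 hz0 hz2 hs0 hs2
  rw [habs2, hbeta]
  exact hcore
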